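/- Let h be strictly increasing with h(i) ≥ 1 and growth condition, and let n < h(j+1) and b = Π_{i=0}^n P_i. Then b^(h(j+1)+1) < P_{j+2}^(h(j+2)−1); consequently 1/P_{j+2}^(h(j+2)−1) < 1/b^(h(j+1)+1). -/

import Mathlib

/-- `P i` is the `i`-th prime number (`P 0 = 2`). -/
noncomputable def P (i : ℕ) : ℕ := Nat.nth Nat.Prime i

lemma P_prime (i : ℕ) : (P i).Prime := Nat.prime_nth_prime i

lemma two_le_P (i : ℕ) : 2 ≤ P i := (P_prime i).two_le

lemma P_le_two_pow (i : ℕ) : P i ≤ 2 ^ (i + 1) := by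
  induction i with
  | zero => simp [P, Nat.nth_prime_zero_eq_two] -- may not exist; fallback below
  | succ k ih =>
    obtain ⟨q, hq, hq1, hq2⟩ := Nat.exists_prime_lt_and_le_two_mul (P k) (P_prime k).pos.ne'
    have hle : P (k + 1) ≤ q := by
      by_contra hc
      push_neg at hc
      exact absurd (Nat.le_nth_of_lt_nth_succ hc hq) (Nat.not_le.mpr hq1)
    calc P (k + 1) ≤ 2 * P k := hle.trans hq2
    _ ≤ 2 * 2 ^ (k + 1) := by omega
    _ = 2 ^ (k + 2) := by ring

theorem b_pow_lt
    (h : ℕ → ℕ) (hmono : StrictMono h) (hpos : ∀ i, 1 ≤ h i)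
    (hgrow : ∀ m, P m ^ (2 * (m + 2) * (h m + 1) ^ 3) < h (m + 1))
    (n j : ℕ) (hn : n < h (j + 1))
    (b : ℕ) (hbdef : b = ∏ i ∈ Finset.range (n + 1), P i) :
    b ^ (h (j + 1) + 1) < P (j + 2) ^ (h (j + 2) - 1) ∧
      (1 : ℝ) / (P (j + 2) : ℝ) ^ (h (j + 2) - 1) < 1 / (b : ℝ) ^ (h (j + 1) + 1) := by
  set K := (h (j + 1) + 1) ^ 3 with hK
  -- b ≤ 2 ^ (n+1)^2
  have hb2 : b ≤ 2 ^ ((n + 1) ^ 2) := by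
    calc b ≤ ∏ i ∈ Finset.range (n + 1), 2 ^ (i + 1) := by
          rw [hbdef]; exact Finset.prod_le_prod' fun i _ => P_le_two_pow i
    _ = 2 ^ (∑ i ∈ Finset.range (n + 1), (i + 1)) := by
          rw [Finset.prod_pow_eq_pow_sum]
    _ ≤ 2 ^ ((n + 1) ^ 2) := by
          apply Nat.pow_le_pow_right (by norm_num)
          have : ∑ i ∈ Finset.range (n + 1), (i + 1) ≤ ∑ _i ∈ Finset.range (n + 1), (n + 1) :=
            Finset.sum_le_sum fun i hi => by
              simp only [Finset.mem_range] at hi; omega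
          simpa [sq] using this
  -- key: K < h (j+2) - 1
  have hgj := hgrow (j + 1)
  have h2K : 2 ^ (2 * (j + 3) * K) ≤ P (j + 1) ^ (2 * (j + 3) * K) :=
    Nat.pow_le_pow_left (two_le_P _) _
  have hKbig : 2 * K < 2 ^ (2 * (j + 3) * K) := by
    calc 2 * K < 2 ^ (2 * K) := Nat.lt_two_pow_self
    _ ≤ 2 ^ (2 * (j + 3) * K) := Nat.pow_le_pow_right (by norm_num) (by nlinarith)
  have hKlt : 2 * K < h (j + 2) := by
    calc 2 * K < 2 ^ (2 * (j + 3) * K) := hKbig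
    _ ≤ P (j + 1) ^ (2 * (j + 3) * K) := h2K
    _ < h (j + 2) := hgj
  have hKpos : 1 ≤ K := Nat.one_le_pow _ _ (by omega)
  have hKlt' : K < h (j + 2) - 1 := by omega
  -- exponent comparison
  have hexp : (n + 1) ^ 2 * (h (j + 1) + 1) ≤ K := by
    have : n + 1 ≤ h (j + 1) + 1 := by omega
    calc (n + 1) ^ 2 * (h (j + 1) + 1) ≤ (h (j + 1) + 1) ^ 2 * (h (j + 1) + 1) :=
          Nat.mul_le_mul_right _ (Nat.pow_le_pow_left this 2)
    _ = K := by rw [hK]; ring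
  have hmain : b ^ (h (j + 1) + 1) < P (j + 2) ^ (h (j + 2) - 1) := by
    calc b ^ (h (j + 1) + 1) ≤ (2 ^ ((n + 1) ^ 2)) ^ (h (j + 1) + 1) :=
          Nat.pow_le_pow_left hb2 _
    _ = 2 ^ ((n + 1) ^ 2 * (h (j + 1) + 1)) := by rw [← pow_mul]
    _ ≤ 2 ^ K := Nat.pow_le_pow_right (by norm_num) hexp
    _ < 2 ^ (h (j + 2) - 1) := Nat.pow_lt_pow_right (by norm_num) hKlt'
    _ ≤ P (j + 2) ^ (h (j + 2) - 1) := Nat.pow_le_pow_left (two_le_P _) _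
  refine ⟨hmain, ?_⟩
  have hbpos : 0 < b := by
    rw [hbdef]; exact Finset.prod_pos fun i _ => (P_prime i).pos
  apply one_div_lt_one_div_of_lt
  · positivity
  · exact_mod_cast hmain
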